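/- (Okumura's inequality) Let A be a real symmetric n×n matrix with trace zero, n ≥ 2. Then trace(A³) ≥ -((n-2)/√(n(n-1))) · ‖A‖³, where ‖A‖² = trace(A²). -/

import Mathlib

open Matrix

theorem okumura_scalar_aux (n : ℕ) (hn : 2 ≤ n) (x : Fin n → ℝ) (h0 : ∑ i, x i = 0) :
    -(((n:ℝ) - 2) / Real.sqrt ((n:ℝ) * ((n:ℝ) - 1))) * (Real.sqrt (∑ i, x i ^ 2)) ^ 3
      ≤ ∑ i, x i ^ 3 := by
  have hn2 : (2:ℝ) ≤ (n:ℝ) := by exact_mod_cast hn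
  set s := ∑ i, x i ^ 2 with hsdef
  have hs0 : 0 ≤ s := Finset.sum_nonneg fun i _ => sq_nonneg _
  have hpos : 0 < (n:ℝ) * ((n:ℝ) - 1) := by nlinarith
  set c := Real.sqrt ((n:ℝ) * ((n:ℝ) - 1)) with hcdef
  have hc : 0 < c := Real.sqrt_pos.mpr hpos
  set a := Real.sqrt (s / ((n:ℝ) * ((n:ℝ) - 1))) with ha
  have ha0 : 0 ≤ a := Real.sqrt_nonneg _
  have ha2 : a ^ 2 = s / ((n:ℝ) * ((n:ℝ) - 1)) := Real.sq_sqrt (div_nonneg hs0 hpos.le)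
  set b := ((n:ℝ) - 1) * a with hb
  have hb0 : 0 ≤ b := mul_nonneg (by linarith) ha0
  have hb2 : b ^ 2 = ((n:ℝ) - 1) * s / n := by
    rw [hb, mul_pow, ha2]; field_simp
  have hxb : ∀ i, -b ≤ x i := by
    intro i
    have h1 : x i + ∑ j ∈ Finset.univ.erase i, x j = 0 := by
      rw [Finset.add_sum_erase _ _ (Finset.mem_univ i)]; exact h0
    have h2 : x i ^ 2 + ∑ j ∈ Finset.univ.erase i, x j ^ 2 = s := by
      exact (Finset.add_sum_erase Finset.univ (fun j => x j ^ 2) (Finset.mem_univ i)).trans hsdef.symm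
    have hcs := sq_sum_le_card_mul_sum_sq (s := Finset.univ.erase i) (f := x)
    have hcard : (((Finset.univ.erase i).card : ℕ) : ℝ) = (n:ℝ) - 1 := by
      rw [Finset.card_erase_of_mem (Finset.mem_univ i), Finset.card_univ, Fintype.card_fin,
        Nat.cast_sub (by omega), Nat.cast_one]
    rw [hcard] at hcs
    have e1 : ∑ j ∈ Finset.univ.erase i, x j = -x i := by linarith
    have e2 : ∑ j ∈ Finset.univ.erase i, x j ^ 2 = s - x i ^ 2 := by linarith
    rw [e1, e2] at hcs
    have hx2 : (n:ℝ) * x i ^ 2 ≤ ((n:ℝ) - 1) * s := by nlinarith [hcs]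
    have hxb2 : x i ^ 2 ≤ b ^ 2 := by
      rw [hb2, le_div_iff₀ (by linarith : (0:ℝ) < (n:ℝ))]; linarith
    nlinarith [hb0, hxb2]
  have hpt : ∀ i ∈ Finset.univ, (0:ℝ) ≤ (x i - a) ^ 2 * (x i + b) := fun i _ =>
    mul_nonneg (sq_nonneg _) (by linarith [hxb i])
  have hsumpt : (0:ℝ) ≤ ∑ i, (x i - a) ^ 2 * (x i + b) := Finset.sum_nonneg hpt
  have hrw : ∀ i ∈ Finset.univ, (x i - a) ^ 2 * (x i + b)
      = x i ^ 3 + (b - 2 * a) * x i ^ 2 + (a ^ 2 - 2 * a * b) * x i + a ^ 2 * b :=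
    fun i _ => by ring
  have hexp : ∑ i, (x i - a) ^ 2 * (x i + b)
      = (∑ i, x i ^ 3) + (b - 2 * a) * s + (a ^ 2 - 2 * a * b) * (∑ i, x i)
        + (n:ℝ) * (a ^ 2 * b) := by
    rw [Finset.sum_congr rfl hrw]
    simp [Finset.sum_add_distrib, ← Finset.mul_sum, Finset.sum_const, Finset.card_univ,
      nsmul_eq_mul, hsdef]
  rw [h0, mul_zero, add_zero] at hexp
  have hkey : -((b - 2 * a) * s + (n:ℝ) * (a ^ 2 * b)) ≤ ∑ i, x i ^ 3 := by
    rw [hexp] at hsumpt; linarith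
  have hnab : (n:ℝ) * (a ^ 2 * b) = a * s := by
    rw [ha2, hb, div_mul_eq_mul_div, mul_div_assoc', div_eq_iff hpos.ne']; ring
  have hsa : Real.sqrt s = c * a := by
    rw [hcdef, ha, ← Real.sqrt_mul hpos.le, mul_div_cancel₀ _ hpos.ne']
  have hfin : -(((n:ℝ) - 2) / c) * (Real.sqrt s) ^ 3 = -(((n:ℝ) - 2) * a * s) := by
    rw [pow_succ, Real.sq_sqrt hs0, hsa]
    field_simp
  rw [hfin]
  have hco : (b - 2 * a) * s + (n:ℝ) * (a ^ 2 * b) = ((n:ℝ) - 2) * a * s := by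
    rw [hnab, hb]; ring
  linarith [hkey]

/-- Okumura's inequality.
For a traceless symmetric real `n × n` matrix `A` (`n ≥ 2`),
`trace (A³) ≥ -((n-2)/√(n(n-1))) ‖A‖³, where `‖A‖ = √(trace (A²))` is the Frobenius norm. -/
theorem okumura_inequality (n : ℕ) (hn : 2 ≤ n)
    (A : Matrix (Fin n) (Fin n) ℝ) (hA : A.IsSymm) (htr : A.trace = 0) :
    (A * A * A).trace ≥
      -(((n : ℝ) - 2) / Real.sqrt (n * (n - 1))) * (Real.sqrt ((A * A).trace)) ^ 3 := by
  have hH : A.IsHermitian := Matrix.ext fun i j => by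
    rw [Matrix.conjTranspose_apply, star_trivial, hA.apply]
  set μ := hH.eigenvalues with hμ
  set U := (hH.eigenvectorUnitary : Matrix (Fin n) (Fin n) ℝ) with hUdef
  have hU : star U * U = 1 := mem_unitaryGroup_iff'.mp hH.eigenvectorUnitary.2
  have hUX : ∀ B : Matrix (Fin n) (Fin n) ℝ, star U * (U * B) = B := fun B => by
    rw [← Matrix.mul_assoc, hU, Matrix.one_mul]
  have spec : A = U * Matrix.diagonal μ * star U := by
    have := hH.spectral_theorem
    simpa [RCLike.ofReal_real_eq_id] using this
  set D := Matrix.diagonal μ with hD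
  have h1 : A.trace = ∑ i, μ i := by
    rw [spec, Matrix.trace_mul_cycle, hU, Matrix.one_mul, hD, Matrix.trace_diagonal]
  have h2 : (A * A).trace = ∑ i, μ i ^ 2 := by
    have e : A * A = U * (D * D) * star U := by
      rw [spec]; simp only [Matrix.mul_assoc, hUX]
    rw [e, Matrix.trace_mul_cycle, ← Matrix.mul_assoc, hU, Matrix.one_mul,
      Matrix.diagonal_mul_diagonal, Matrix.trace_diagonal]
    exact Finset.sum_congr rfl fun i _ => by simp [sq]
  have h3 : (A * A * A).trace = ∑ i, μ i ^ 3 := by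
    have e : A * A * A = U * (D * (D * D)) * star U := by
      rw [spec]; simp only [Matrix.mul_assoc, hUX]
    rw [e, Matrix.trace_mul_cycle, ← Matrix.mul_assoc, hU, Matrix.one_mul,
      Matrix.diagonal_mul_diagonal, Matrix.diagonal_mul_diagonal, Matrix.trace_diagonal]
    exact Finset.sum_congr rfl fun i _ => by simp [pow_succ, sq]; ring
  rw [h2, h3, ge_iff_le]
  exact okumura_scalar_aux n hn μ (by rw [← h1]; exact htr)
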